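/- Consider a deep LSTM with L ≥ 1 layers: layer l (for l = 1,…,L) has n_c^{(l)} units, weights W_f^{(l)}, W_i^{(l)}, W_z^{(l)}, W_r^{(l)} (of size n_c^{(l)} × n_u for l = 1 and n_c^{(l)} × n_c^{(l−1)} for l > 1), U_f^{(l)}, U_i^{(l)}, U_z^{(l)}, U_r^{(l)} ∈ ℝ^{n_c^{(l)}×n_c^{(l)}}, biases b_f^{(l)}, b_i^{(l)}, b_z^{(l)}, b_r^{(l)} ∈ ℝ^{n_c^{(l)}}, and state update c⁺^{(l)} = f^{(l)}∘c^{(l)} + i^{(l)}∘r^{(l)}, h⁺^{(l)} = z^{(l)}∘φ(c⁺^{(l)}), where the gates f^{(l)}, i^{(l)}, z^{(l)} are σ and r^{(l)} is φ of W_*^{(l)} u^{(l)} + U_*^{(l)} h^{(l)} + b_*^{(l)}, the input of layer 1 is u^{(1)} = u, and the input of layer l ≥ 2 is u^{(l)} = h⁺^{(l−1)}. For each layer define σ̄_f^{(l)}, σ̄_i^{(l)}, φ̄_r^{(l)} as σ (resp. tanh) of the maximum row ℓ¹ norm of the augmented matrices [W_*^{(l)} U_*^{(l)} b_*^{(l)}],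 and set c̄^{(l)} = σ̄_i^{(l)} φ̄_r^{(l)}/(1−σ̄_f^{(l)}) and h̄^{(l)} = tanh(c̄^{(l)}). Then the set 𝒳 = ∏_{l=1}^L { (c,h) : ‖c‖∞ ≤ c̄^{(l)}, ‖h‖∞ ≤ h̄^{(l)} } is an invariant set: for every input u with ‖u‖∞ ≤ 1, if the full state lies in 𝒳 then the updated full state lies in 𝒳. -/
import Mathlib


/-- The sigmoid activation function `σ(x) = 1/(1+e^{-x})`. -/
noncomputable def sigm (x : ℝ) : ℝ := 1 / (1 + Real.exp (-x))

/-- The maximum over rows of the ℓ¹ norm of the rows of the augmented matrix `[W U b]`. -/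
noncomputable def augRowMax {n m p : ℕ} (W : Matrix (Fin n) (Fin m) ℝ)
    (U : Matrix (Fin n) (Fin p) ℝ) (b : Fin n → ℝ) : ℝ :=
  ⨆ j, (∑ i, |W j i| + ∑ i, |U j i| + |b j|)

/-- Input dimension of layer `l` of a deep LSTM: `n_u` for the first layer,
`n_c^{(l-1)}` for the following ones. -/
def nIn (nu : ℕ) (nc : ℕ → ℕ) : ℕ → ℕ
  | 0 => nu
  | l + 1 => nc l

section Helpers

lemma sigm_pos (x : ℝ) : 0 < sigm x := by
  unfold sigm; positivity

lemma sigm_lt_one (x : ℝ) : sigm x < 1 := by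
  unfold sigm
  rw [div_lt_one (by positivity)]
  linarith [Real.exp_pos (-x)]

lemma sigm_le_one (x : ℝ) : sigm x ≤ 1 := (sigm_lt_one x).le

lemma sigm_mono : Monotone sigm := by
  intro x y hxy
  unfold sigm
  apply one_div_le_one_div_of_le (by positivity)
  have := Real.exp_le_exp.mpr (neg_le_neg hxy)
  linarith

lemma tanh_eq_sigm (x : ℝ) : Real.tanh x = 2 * sigm (2 * x) - 1 := by
  rw [Real.tanh_eq_sinh_div_cosh, Real.sinh_eq, Real.cosh_eq]
  unfold sigm
  have h1 : Real.exp x > 0 := Real.exp_pos x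
  have h2 : Real.exp (-x) > 0 := Real.exp_pos (-x)
  have h3 : Real.exp (-(2 * x)) = Real.exp (-x) * Real.exp (-x) := by
    rw [← Real.exp_add]; ring_nf
  have h4 : Real.exp x * Real.exp (-x) = 1 := by
    rw [← Real.exp_add]; simp
  rw [h3]
  field_simp
  nlinarith [h4]

lemma tanh_mono : Monotone Real.tanh := by
  intro x y hxy
  rw [tanh_eq_sigm, tanh_eq_sigm]
  have := sigm_mono (by linarith : 2 * x ≤ 2 * y)
  linarith

lemma tanh_le_one (x : ℝ) : Real.tanh x ≤ 1 := by
  rw [tanh_eq_sigm]; have := sigm_le_one (2 * x); linarith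

lemma tanh_nonneg {x : ℝ} (hx : 0 ≤ x) : 0 ≤ Real.tanh x := by
  have := tanh_mono hx
  simpa [Real.tanh_zero] using this

lemma abs_tanh (x : ℝ) : |Real.tanh x| ≤ Real.tanh |x| := by
  rcases le_or_gt 0 x with h | h
  · rw [abs_of_nonneg h, abs_of_nonneg (tanh_nonneg h)]
  · have ht : Real.tanh x ≤ 0 := by
      have := tanh_mono h.le
      simpa [Real.tanh_zero] using this
    rw [abs_of_neg h, abs_of_nonpos ht, Real.tanh_neg]

lemma augRowMax_ge {n m p : ℕ} (W : Matrix (Fin n) (Fin m) ℝ)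
    (U : Matrix (Fin n) (Fin p) ℝ) (b : Fin n → ℝ) (j : Fin n) :
    ∑ i, |W j i| + ∑ i, |U j i| + |b j| ≤ augRowMax W U b := by
  exact le_ciSup (Set.Finite.bddAbove (Set.finite_range
    (fun j => ∑ i, |W j i| + ∑ i, |U j i| + |b j|))) j

lemma augRowMax_nonneg {n m p : ℕ} (W : Matrix (Fin n) (Fin m) ℝ)
    (U : Matrix (Fin n) (Fin p) ℝ) (b : Fin n → ℝ) :
    0 ≤ augRowMax W U b := by
  cases isEmpty_or_nonempty (Fin n) with
  | inl h => simp [augRowMax, Real.iSup_of_isEmpty]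
  | inr h =>
    refine le_trans ?_ (augRowMax_ge W U b (Classical.arbitrary _))
    positivity

lemma argBound {n m p : ℕ} (W : Matrix (Fin n) (Fin m) ℝ)
    (U : Matrix (Fin n) (Fin p) ℝ) (b : Fin n → ℝ)
    (u : Fin m → ℝ) (v : Fin p → ℝ) (hu : ‖u‖ ≤ 1) (hv : ‖v‖ ≤ 1) (j : Fin n) :
    |(Matrix.mulVec W u + Matrix.mulVec U v + b) j| ≤ augRowMax W U b := by
  have hW : |Matrix.mulVec W u j| ≤ ∑ i, |W j i| := by
    rw [Matrix.mulVec, dotProduct]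
    refine le_trans (Finset.abs_sum_le_sum_abs _ _) (Finset.sum_le_sum fun i _ => ?_)
    rw [abs_mul]
    have : |u i| ≤ 1 := le_trans (by simpa using norm_le_pi_norm u i) hu
    nlinarith [abs_nonneg (W j i), abs_nonneg (u i)]
  have hU : |Matrix.mulVec U v j| ≤ ∑ i, |U j i| := by
    rw [Matrix.mulVec, dotProduct]
    refine le_trans (Finset.abs_sum_le_sum_abs _ _) (Finset.sum_le_sum fun i _ => ?_)
    rw [abs_mul]
    have : |v i| ≤ 1 := le_trans (by simpa using norm_le_pi_norm v i) hv
    nlinarith [abs_nonneg (U j i), abs_nonneg (v i)]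
  refine le_trans ?_ (augRowMax_ge W U b j)
  calc |(Matrix.mulVec W u + Matrix.mulVec U v + b) j|
      ≤ |Matrix.mulVec W u j| + |Matrix.mulVec U v j| + |b j| := by
        simp only [Pi.add_apply]
        exact le_trans (abs_add_le _ _)
          (by linarith [abs_add_le (Matrix.mulVec W u j) (Matrix.mulVec U v j)])
    _ ≤ _ := by linarith

end Helpers

/-- Proposition 2: the set `𝒳 = ∏_l { (c,h) : ‖c‖∞ ≤ c̄^{(l)}, ‖h‖∞ ≤ h̄^{(l)} }` is an
invariant set of the deep LSTM: for any input `u` with `‖u‖∞ ≤ 1`, if the full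
state `(c^{(l)}, h^{(l)})_{l<L}` lies in `𝒳`, then the updated full state
`(c⁺^{(l)}, h⁺^{(l)})_{l<L}` lies in `𝒳`.  Layer `l+1` is fed the updated hidden
state `h⁺^{(l)}` of the previous layer. -/
theorem stmt_5 (L : ℕ) (hL : 1 ≤ L) (nu : ℕ) (nc : ℕ → ℕ)
    (Wf Wi Wz Wr : (l : ℕ) → Matrix (Fin (nc l)) (Fin (nIn nu nc l)) ℝ)
    (Uf Ui Uz Ur : (l : ℕ) → Matrix (Fin (nc l)) (Fin (nc l)) ℝ)
    (bf bi bz br : (l : ℕ) → Fin (nc l) → ℝ)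
    (σf σi φr cbar hbar : ℕ → ℝ)
    (hσf : ∀ l, σf l = sigm (augRowMax (Wf l) (Uf l) (bf l)))
    (hσi : ∀ l, σi l = sigm (augRowMax (Wi l) (Ui l) (bi l)))
    (hφr : ∀ l, φr l = Real.tanh (augRowMax (Wr l) (Ur l) (br l)))
    (hcbar : ∀ l, cbar l = σi l * φr l / (1 - σf l))
    (hhbar : ∀ l, hbar l = Real.tanh (cbar l))
    -- the input, the current state, and the updated state
    (u : Fin nu → ℝ) (hu : ‖u‖ ≤ 1)
    (c h cplus hplus : (l : ℕ) → Fin (nc l) → ℝ)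
    -- the input of each layer: `u` for layer 0, the updated hidden state of the
    -- preceding layer otherwise
    (uIn : (l : ℕ) → Fin (nIn nu nc l) → ℝ)
    (huIn0 : uIn 0 = u)
    (huInSucc : ∀ l, uIn (l + 1) = hplus l)
    -- the LSTM state update equations of each layer
    (hcplus : ∀ l < L, cplus l = fun j =>
      sigm ((Matrix.mulVec (Wf l) (uIn l) + Matrix.mulVec (Uf l) (h l) + bf l) j) * c l j +
      sigm ((Matrix.mulVec (Wi l) (uIn l) + Matrix.mulVec (Ui l) (h l) + bi l) j) *
        Real.tanh ((Matrix.mulVec (Wr l) (uIn l) + Matrix.mulVec (Ur l) (h l) + br l) j))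
    (hhplus : ∀ l < L, hplus l = fun j =>
      sigm ((Matrix.mulVec (Wz l) (uIn l) + Matrix.mulVec (Uz l) (h l) + bz l) j) *
        Real.tanh (cplus l j))
    -- the current state lies in the invariant set 𝒳
    (hstate : ∀ l < L, ‖c l‖ ≤ cbar l ∧ ‖h l‖ ≤ hbar l) :
    -- then the updated state lies in 𝒳 as well
    ∀ l < L, ‖cplus l‖ ≤ cbar l ∧ ‖hplus l‖ ≤ hbar l := by
  --

  -- basic facts about the bounds
  have hσf_pos : ∀ l, 0 < σf l := fun l => (hσf l).symm ▸ sigm_pos _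
  have hσf_lt : ∀ l, σf l < 1 := fun l => (hσf l).symm ▸ sigm_lt_one _
  have hσi_pos : ∀ l, 0 < σi l := fun l => (hσi l).symm ▸ sigm_pos _
  have hσi_le : ∀ l, σi l ≤ 1 := fun l => (hσi l).symm ▸ sigm_le_one _
  have hφr_nonneg : ∀ l, 0 ≤ φr l := fun l =>
    (hφr l).symm ▸ tanh_nonneg (augRowMax_nonneg _ _ _)
  have hcbar_nonneg : ∀ l, 0 ≤ cbar l := by
    intro l
    rw [hcbar l]
    exact div_nonneg (mul_nonneg (hσi_pos l).le (hφr_nonneg l)) (by linarith [hσf_lt l])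
  have hhbar_nonneg : ∀ l, 0 ≤ hbar l := fun l =>
    (hhbar l).symm ▸ tanh_nonneg (hcbar_nonneg l)
  have hhbar_le_one : ∀ l, hbar l ≤ 1 := fun l => (hhbar l).symm ▸ tanh_le_one _
  -- the key single-layer step
  have step : ∀ l, l < L → ‖uIn l‖ ≤ 1 → ‖cplus l‖ ≤ cbar l ∧ ‖hplus l‖ ≤ hbar l := by
    intro l hl hin
    obtain ⟨hc, hh⟩ := hstate l hl
    have hh1 : ‖h l‖ ≤ 1 := hh.trans (hhbar_le_one l)
    have hcp : ‖cplus l‖ ≤ cbar l := by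
      rw [pi_norm_le_iff_of_nonneg (hcbar_nonneg l)]
      intro j
      rw [hcplus l hl]
      simp only [Real.norm_eq_abs]
      have hfA := argBound (Wf l) (Uf l) (bf l) (uIn l) (h l) hin hh1 j
      have hiA := argBound (Wi l) (Ui l) (bi l) (uIn l) (h l) hin hh1 j
      have hrA := argBound (Wr l) (Ur l) (br l) (uIn l) (h l) hin hh1 j
      set af := (Matrix.mulVec (Wf l) (uIn l) + Matrix.mulVec (Uf l) (h l) + bf l) j with haf
      set ai := (Matrix.mulVec (Wi l) (uIn l) + Matrix.mulVec (Ui l) (h l) + bi l) j with hai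
      set ar := (Matrix.mulVec (Wr l) (uIn l) + Matrix.mulVec (Ur l) (h l) + br l) j with har
      have hsf : sigm af ≤ σf l := by
        rw [hσf l]; exact sigm_mono ((le_abs_self af).trans hfA)
      have hsi : sigm ai ≤ σi l := by
        rw [hσi l]; exact sigm_mono ((le_abs_self ai).trans hiA)
      have htr : |Real.tanh ar| ≤ φr l := by
        rw [hφr l]; exact (abs_tanh ar).trans (tanh_mono hrA)
      have hcj : |c l j| ≤ cbar l :=
        le_trans (by simpa using norm_le_pi_norm (c l) j) hc
      have key : σi l * φr l = cbar l * (1 - σf l) := by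
        rw [hcbar l]
        exact (div_mul_cancel₀ _ (by linarith [hσf_lt l] : (1:ℝ) - σf l ≠ 0)).symm
      have t1 : sigm af * |c l j| ≤ σf l * cbar l :=
        mul_le_mul hsf hcj (abs_nonneg _) (hσf_pos l).le
      have t2 : sigm ai * |Real.tanh ar| ≤ σi l * φr l :=
        mul_le_mul hsi htr (abs_nonneg _) (hσi_pos l).le
      calc |sigm af * c l j + sigm ai * Real.tanh ar|
          ≤ |sigm af * c l j| + |sigm ai * Real.tanh ar| := abs_add_le _ _
        _ = sigm af * |c l j| + sigm ai * |Real.tanh ar| := by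
            rw [abs_mul, abs_mul, abs_of_pos (sigm_pos af), abs_of_pos (sigm_pos ai)]
        _ ≤ σf l * cbar l + σi l * φr l := add_le_add t1 t2
        _ = cbar l := by rw [key]; ring
    refine ⟨hcp, ?_⟩
    rw [pi_norm_le_iff_of_nonneg (hhbar_nonneg l)]
    intro j
    rw [hhplus l hl]
    simp only [Real.norm_eq_abs]
    set az := (Matrix.mulVec (Wz l) (uIn l) + Matrix.mulVec (Uz l) (h l) + bz l) j with haz
    have hcj : |cplus l j| ≤ cbar l :=
      le_trans (by simpa using norm_le_pi_norm (cplus l) j) hcp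
    have ht : |Real.tanh (cplus l j)| ≤ Real.tanh (cbar l) :=
      (abs_tanh _).trans (tanh_mono hcj)
    calc |sigm az * Real.tanh (cplus l j)|
        = sigm az * |Real.tanh (cplus l j)| := by
          rw [abs_mul, abs_of_pos (sigm_pos az)]
      _ ≤ 1 * Real.tanh (cbar l) :=
          mul_le_mul (sigm_le_one az) ht (abs_nonneg _) one_pos.le
      _ = hbar l := by rw [hhbar l]; ring
  -- induction over layers to propagate the input bound
  have main : ∀ l, l < L → ‖uIn l‖ ≤ 1 ∧ (‖cplus l‖ ≤ cbar l ∧ ‖hplus l‖ ≤ hbar l) := by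
    intro l
    induction l with
    | zero =>
      intro hl
      have hin : ‖uIn 0‖ ≤ 1 := by rw [huIn0]; exact hu
      exact ⟨hin, step 0 hl hin⟩
    | succ n ih =>
      intro hl
      have hn : n < L := Nat.lt_of_succ_lt hl
      obtain ⟨_, _, hhp⟩ := ih hn
      have hin : ‖uIn (n + 1)‖ ≤ 1 := by
        rw [huInSucc n]; exact hhp.trans (hhbar_le_one n)
      exact ⟨hin, step (n + 1) hl hin⟩
  intro l hl
  exact (main l hl).2
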